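/- For every integer n ≥ 1, ∑_{k=0}^{n} C(n,k)·Bₖ·B_{n-k} = -(n-1)·Bₙ - n·B_{n-1}. -/

import Mathlib

open PowerSeries Finset

private lemma deriv_exp' : d⁄dX ℚ (exp ℚ) = exp ℚ := by
  ext n
  rw [coeff_derivative, coeff_exp, coeff_exp]
  simp [Nat.factorial_succ]
  field_simp

private lemma bps_sq_gen (B E : PowerSeries ℚ) (h1 : B * (E - 1) = X)
    (hE : d⁄dX ℚ E = E) :
    B * B = B - X * B - X * d⁄dX ℚ B := by
  have h2 : d⁄dX ℚ (B * (E - 1)) = 1 := by rw [h1, derivative_X]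
  rw [Derivation.leibniz] at h2
  simp only [smul_eq_mul, map_sub, hE, Derivation.map_one_eq_zero, sub_zero] at h2
  have h3 : B * (B * E) + B * ((E - 1) * d⁄dX ℚ B) = B := by
    linear_combination B * h2
  have hBE : B * E = X + B := by
    have h : B * E = B * (E - 1) + B := by ring
    rw [h, h1]
  have hX : B * ((E - 1) * d⁄dX ℚ B) = X * d⁄dX ℚ B := by
    rw [show B * ((E - 1) * d⁄dX ℚ B) = (B * (E - 1)) * d⁄dX ℚ B by ring, h1]
  rw [hBE, hX] at h3
  linear_combination h3

private lemma bps_sq :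
    bernoulliPowerSeries ℚ * bernoulliPowerSeries ℚ =
      bernoulliPowerSeries ℚ - X * bernoulliPowerSeries ℚ -
        X * d⁄dX ℚ (bernoulliPowerSeries ℚ) :=
  bps_sq_gen _ _ (bernoulliPowerSeries_mul_exp_sub_one ℚ) deriv_exp'

private lemma coeff_bps (k : ℕ) :
    coeff k (bernoulliPowerSeries ℚ) = bernoulli k / k.factorial := by
  simp [bernoulliPowerSeries]

theorem bernoulli_convolution_full (n : ℕ) (hn : 1 ≤ n) :
    ∑ k ∈ Finset.range (n + 1), (n.choose k : ℚ) * bernoulli k * bernoulli (n - k) =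
      -((n : ℚ) - 1) * bernoulli n - (n : ℚ) * bernoulli (n - 1) := by
  obtain ⟨m, rfl⟩ : ∃ m, n = m + 1 := ⟨n - 1, (Nat.succ_pred_eq_of_pos hn).symm⟩
  set n := m + 1 with hn'
  have key := congrArg (coeff n) bps_sq
  rw [coeff_mul, map_sub, map_sub, coeff_succ_X_mul, coeff_succ_X_mul, coeff_derivative,
    Finset.Nat.sum_antidiagonal_eq_sum_range_succ_mk] at key
  simp only [coeff_bps] at key
  -- key : ∑ k in range (n+1), bernoulli k / k! * (bernoulli (n-k) / (n-k)!) =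
  --   bernoulli n / n! - bernoulli m / m! - bernoulli (m+1) / (m+1).factorial * (m+1)
  have hfac : (n.factorial : ℚ) ≠ 0 := Nat.cast_ne_zero.mpr n.factorial_ne_zero
  have key2 := congrArg (fun x => (n.factorial : ℚ) * x) key
  simp only [Finset.mul_sum] at key2
  have hL : ∀ k ∈ Finset.range (n + 1),
      (n.factorial : ℚ) * (bernoulli k / k.factorial * (bernoulli (n - k) / (n-k).factorial)) =
        (n.choose k : ℚ) * bernoulli k * bernoulli (n - k) := by
    intro k hk
    rw [Finset.mem_range, Nat.lt_succ_iff] at hk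
    rw [Nat.cast_choose ℚ hk]
    have h1 : (k.factorial : ℚ) ≠ 0 := Nat.cast_ne_zero.mpr k.factorial_ne_zero
    have h2 : ((n-k).factorial : ℚ) ≠ 0 := Nat.cast_ne_zero.mpr (n - k).factorial_ne_zero
    field_simp
  rw [Finset.sum_congr rfl hL] at key2
  rw [key2]
  have hmfac : (n.factorial : ℚ) = n * m.factorial := by
    rw [hn', Nat.factorial_succ]; push_cast; ring
  have h2 : (m.factorial : ℚ) ≠ 0 := Nat.cast_ne_zero.mpr m.factorial_ne_zero
  have hmm : n - 1 = m := by omega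
  rw [hmm]
  have hnm : ((m : ℚ) + 1) = (n : ℚ) := by push_cast [hn']; ring
  rw [show bernoulli (m + 1) = bernoulli n by rw [hn']]
  field_simp [hmfac]
  push_cast [hn']
  rw [Nat.factorial_succ]; push_cast
  ring
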